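/- Let R be a commutative domain with field of fractions Q, let s be a ring automorphism of R with s ∘ s = id, let R^s = {r ∈ R | s(r) = r} be its fixed subring, and let δ ∈ R be an element such that (1, δ) is a basis of R as an R^s-module. Consider B := R ⊗_{R^s} Q, regarded as a left R-module via the first tensor factor and a right Q-module via the second. Then: (i) the pair (δ⊗1 − 1⊗s(δ), δ⊗1 − 1⊗δ) is a basis of B as a right Q-module, so that B = (δ⊗1 − 1⊗s(δ))·Q ⊕ (δ⊗1 − 1⊗δ)·Q; (ii) for every r ∈ R one has r·(δ⊗1 − 1⊗s(δ)) = (δ⊗1 − 1⊗s(δ))·r and s(r)·(δ⊗1 − 1⊗δ) = (δ⊗1 − 1⊗δ)·r, where n·r denotes the right action of the image of r in Q. -/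

import Mathlib

open TensorProduct

/-- The subring of fixed points of a ring automorphism `s` of `R`. -/
def RingAut.fixedSubring {R : Type*} [CommRing R] (s : RingAut R) : Subring R where
  carrier := {r : R | s r = r}
  zero_mem' := by simp
  one_mem' := by simp
  add_mem' := fun {a b} ha hb => by
    have ha' : s a = a := ha
    have hb' : s b = b := hb
    show s (a + b) = a + b
    rw [map_add, ha', hb']
  neg_mem' := fun {a} ha => by
    have ha' : s a = a := ha
    show s (-a) = -a
    rw [map_neg, ha']
  mul_mem' := fun {a b} ha hb => by
    have ha' : s a = a := ha
    have hb' : s b = b := hb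
    show s (a * b) = a * b
    rw [map_mul, ha', hb']

/-!
Statement 5: Let `R` be a commutative domain with fraction field `Q`, `s` a ring automorphism
of `R` with `s ∘ s = id`, `R^s` its fixed subring, and `δ ∈ R` such that `(1, δ)` is a basis
of `R` as an `R^s`-module.  Let `B := R ⊗_{R^s} Q`, with left `R`-action given by
multiplication by `r ⊗ 1` and right `Q`-action given by multiplication by `1 ⊗ q`.  Then:
(i) `(δ⊗1 - 1⊗s(δ), δ⊗1 - 1⊗δ)` is a basis of `B` as a right `Q`-module, i.e. every element
of `B` is uniquely of the form `η·q₁ + ξ·q₂`;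
(ii) `r·η = η·r` and `s(r)·ξ = ξ·r` for all `r ∈ R`.
-/

set_option maxHeartbeats 1000000 in
theorem weight_basis_of_Bs_tensor_Q
    {R : Type*} [CommRing R] [IsDomain R]
    (s : RingAut R) (hs : ∀ r : R, s (s r) = r)
    (δ : R)
    (hδ : ∀ r : R, ∃! p : s.fixedSubring × s.fixedSubring, r = (p.1 : R) + (p.2 : R) * δ) :
    letI Q := FractionRing R
    letI : Algebra s.fixedSubring R := s.fixedSubring.subtype.toAlgebra
    letI : Algebra s.fixedSubring Q :=
      ((algebraMap R Q).comp s.fixedSubring.subtype).toAlgebra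
    letI η : R ⊗[s.fixedSubring] Q := δ ⊗ₜ (1 : Q) - (1 : R) ⊗ₜ (algebraMap R Q (s δ))
    letI ξ : R ⊗[s.fixedSubring] Q := δ ⊗ₜ (1 : Q) - (1 : R) ⊗ₜ (algebraMap R Q δ)
    (∀ x : R ⊗[s.fixedSubring] Q, ∃! q : Q × Q,
        x = ((1 : R) ⊗ₜ q.1) * η + ((1 : R) ⊗ₜ q.2) * ξ) ∧
    (∀ r : R, (r ⊗ₜ (1 : Q)) * η = ((1 : R) ⊗ₜ (algebraMap R Q r)) * η) ∧
    (∀ r : R, ((s r) ⊗ₜ (1 : Q)) * ξ = ((1 : R) ⊗ₜ (algebraMap R Q r)) * ξ) := by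
  letI Q := FractionRing R
  letI : Algebra s.fixedSubring R := s.fixedSubring.subtype.toAlgebra
  letI : Algebra s.fixedSubring Q :=
    ((algebraMap R Q).comp s.fixedSubring.subtype).toAlgebra
  have hsmR : ∀ (a : s.fixedSubring) (x : R), a • x = (a : R) * x := fun a x => rfl
  have hsmQ : ∀ (a : s.fixedSubring) (q : Q), a • q = algebraMap R Q (a : R) * q :=
    fun a q => by rw [← smul_one_smul R a q, hsmR, mul_one, Algebra.smul_def]
  have hsmul1 : ∀ (a : s.fixedSubring) (x : R) (q : Q),
      ((a : R) * x) ⊗ₜ[s.fixedSubring] q = x ⊗ₜ[s.fixedSubring] (algebraMap R Q (a : R) * q) := by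
    intro a x q
    rw [← hsmR, ← hsmQ, smul_tmul]
  have hsmul0 : ∀ (a : s.fixedSubring) (q : Q),
      ((a : R)) ⊗ₜ[s.fixedSubring] q = (1:R) ⊗ₜ[s.fixedSubring] (algebraMap R Q (a : R) * q) := by
    intro a q
    conv_lhs => rw [← mul_one (a : R)]
    rw [hsmul1]
  -- coordinates
  set c : R → s.fixedSubring × s.fixedSubring := fun r => (hδ r).choose with hcdef
  have hc : ∀ r : R, r = ((c r).1 : R) + ((c r).2 : R) * δ := fun r => (hδ r).choose_spec.1
  have hcu : ∀ (r : R) (p : s.fixedSubring × s.fixedSubring),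
      r = (p.1 : R) + (p.2 : R) * δ → p = c r := fun r p h => (hδ r).choose_spec.2 p h
  have hcadd : ∀ r r' : R, c (r + r') = c r + c r' := by
    intro r r'
    refine (hcu _ _ ?_).symm
    simp only [Prod.fst_add, Prod.snd_add, Subring.coe_add]
    linear_combination hc r + hc r'
  have hcsmul : ∀ (a : s.fixedSubring) (r : R), c ((a : R) * r) = a • c r := by
    intro a r
    refine (hcu _ _ ?_).symm
    show (a:R) * r = ((a • (c r)).1 : R) + ((a • (c r)).2 : R) * δ
    simp only [Prod.smul_fst, Prod.smul_snd, smul_eq_mul, Subring.coe_mul]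
    linear_combination (a : R) * hc r
  -- the coordinate linear map
  letI φ₀ : R →ₗ[s.fixedSubring] Q →ₗ[s.fixedSubring] (Q × Q) :=
    LinearMap.mk₂ s.fixedSubring
      (fun r q => (algebraMap R Q ((c r).1 : R) * q, algebraMap R Q ((c r).2 : R) * q))
      (fun r r' q => by
        beta_reduce
        rw [hcadd]
        simp only [Prod.fst_add, Prod.snd_add, Subring.coe_add, map_add, Prod.mk_add_mk]
        rw [add_mul, add_mul])
      (fun a r q => by
        beta_reduce
        have h' : a • r = (a : R) * r := hsmR a r
        rw [h', hcsmul]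
        simp only [Prod.smul_fst, Prod.smul_snd, smul_eq_mul, Subring.coe_mul, map_mul,
          Prod.smul_mk]
        rw [hsmQ, hsmQ, mul_assoc, mul_assoc])
      (fun r q q' => by beta_reduce; simp only [mul_add, Prod.mk_add_mk])
      (fun a r q => by
        beta_reduce
        rw [hsmQ]
        simp only [Prod.smul_mk]
        rw [hsmQ, hsmQ]
        simp only [Prod.mk.injEq]
        constructor <;> ring)
  letI φ : R ⊗[s.fixedSubring] Q →ₗ[s.fixedSubring] (Q × Q) := TensorProduct.lift φ₀
  have hφt : ∀ (r : R) (q : Q), φ (r ⊗ₜ q)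
      = (algebraMap R Q ((c r).1 : R) * q, algebraMap R Q ((c r).2 : R) * q) :=
    fun r q => rfl
  clear_value φ₀ φ
  have hc1 : c (1 : R) = (1, 0) := (hcu 1 (1, 0) (by push_cast; ring)).symm
  have hcδ : c δ = (0, 1) := (hcu δ (0, 1) (by push_cast; ring)).symm
  have hli : ∀ x : R ⊗[s.fixedSubring] Q,
      (1 : R) ⊗ₜ[s.fixedSubring] (φ x).1 + δ ⊗ₜ[s.fixedSubring] (φ x).2 = x := by
    intro x
    induction x using TensorProduct.induction_on with
    | zero => rw [map_zero]; simp only [Prod.fst_zero, Prod.snd_zero, tmul_zero, add_zero]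
    | tmul r q =>
      rw [hφt]
      show (1:R) ⊗ₜ[s.fixedSubring] (algebraMap R Q ((c r).1 : R) * q)
          + δ ⊗ₜ[s.fixedSubring] (algebraMap R Q ((c r).2 : R) * q) = r ⊗ₜ[s.fixedSubring] q
      rw [← hsmul1, ← hsmul1, mul_one, ← add_tmul, ← hc r]
    | add x y hx hy =>
      rw [map_add]
      simp only [Prod.fst_add, Prod.snd_add, tmul_add]
      conv_rhs => rw [← hx, ← hy]
      rw [add_add_add_comm]
  have hinj : Function.Injective φ := fun x y h => by rw [← hli x, ← hli y, h]
  have hδne : s δ ≠ δ := by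
    intro h
    have h1 : ((⟨δ, h⟩ : s.fixedSubring), (0 : s.fixedSubring)) = c δ :=
      hcu δ _ (by push_cast; ring)
    rw [hcδ] at h1
    have h2 : ((0 : s.fixedSubring) : R) = ((1 : s.fixedSubring) : R) :=
      congrArg (fun p => ((p.2 : s.fixedSubring) : R)) h1
    simp at h2
  have hne : algebraMap R Q (s δ) ≠ algebraMap R Q δ :=
    fun h => hδne (IsFractionRing.injective R Q h)
  have hmul : ∀ (x y : R) (p q : Q),
      (x ⊗ₜ[s.fixedSubring] p) * (y ⊗ₜ[s.fixedSubring] q) = (x * y) ⊗ₜ[s.fixedSubring] (p * q) :=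
    fun x y p q => by rw [Algebra.TensorProduct.tmul_mul_tmul]
  have hq : ∀ (q w : Q) (u : R),
      ((1:R) ⊗ₜ[s.fixedSubring] q) * (u ⊗ₜ[s.fixedSubring] (1:Q) - (1:R) ⊗ₜ[s.fixedSubring] w)
      = u ⊗ₜ[s.fixedSubring] q - (1:R) ⊗ₜ[s.fixedSubring] (q * w) := by
    intro q w u
    rw [mul_sub, hmul, hmul, one_mul, mul_one, one_mul]
  have hφq : ∀ (q w : Q),
      φ (((1:R) ⊗ₜ[s.fixedSubring] q) * (δ ⊗ₜ[s.fixedSubring] (1:Q) - (1:R) ⊗ₜ[s.fixedSubring] w))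
      = (-(q * w), q) := by
    intro q w
    rw [hq, map_sub, hφt, hφt, hc1, hcδ]
    simp only [map_zero, map_one, zero_mul, one_mul, OneMemClass.coe_one, ZeroMemClass.coe_zero]
    rw [Prod.mk_sub_mk]
    rw [zero_sub, sub_zero]
  -- key algebraic identities
  have ht : s (δ + s δ) = δ + s δ := by rw [map_add, hs, add_comm]
  have hn : s (δ * s δ) = δ * s δ := by rw [map_mul, hs, mul_comm]
  have e1 : ((δ + s δ) * δ) ⊗ₜ[s.fixedSubring] (1:Q)
      = δ ⊗ₜ[s.fixedSubring] (algebraMap R Q (δ + s δ) * 1) := hsmul1 ⟨_, ht⟩ δ 1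
  have e2 : ((δ * s δ) * 1) ⊗ₜ[s.fixedSubring] (1:Q)
      = (1:R) ⊗ₜ[s.fixedSubring] (algebraMap R Q (δ * s δ) * 1) := hsmul1 ⟨_, hn⟩ 1 1
  have e3 : ∀ (q : Q), ((δ + s δ) * 1) ⊗ₜ[s.fixedSubring] q
      = (1:R) ⊗ₜ[s.fixedSubring] (algebraMap R Q (δ + s δ) * q) := fun q => hsmul1 ⟨_, ht⟩ 1 q
  set d := algebraMap R Q δ with hd
  set σ := algebraMap R Q (s δ) with hσ
  set η : R ⊗[s.fixedSubring] Q :=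
    δ ⊗ₜ (1 : Q) - (1 : R) ⊗ₜ[s.fixedSubring] σ with hη
  set ξ : R ⊗[s.fixedSubring] Q :=
    δ ⊗ₜ (1 : Q) - (1 : R) ⊗ₜ[s.fixedSubring] d with hξ
  have hξη : ξ * η = 0 := by
    rw [hξ, hη]
    calc (δ ⊗ₜ[s.fixedSubring] (1:Q) - (1:R) ⊗ₜ[s.fixedSubring] d)
          * (δ ⊗ₜ[s.fixedSubring] (1:Q) - (1:R) ⊗ₜ[s.fixedSubring] σ)
        = (δ*δ) ⊗ₜ[s.fixedSubring] ((1:Q)*1) - (δ*1) ⊗ₜ[s.fixedSubring] (1*σ)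
          - ((1*δ) ⊗ₜ[s.fixedSubring] (d*1) - (1*1 : R) ⊗ₜ[s.fixedSubring] (d*σ)) := by
          rw [sub_mul, mul_sub, mul_sub, hmul, hmul, hmul, hmul]
      _ = ((δ + s δ) * δ) ⊗ₜ[s.fixedSubring] (1:Q) - ((δ * s δ) * 1) ⊗ₜ[s.fixedSubring] (1:Q)
          - δ ⊗ₜ[s.fixedSubring] σ - δ ⊗ₜ[s.fixedSubring] d + (1:R) ⊗ₜ[s.fixedSubring] (d*σ) := by
          rw [show δ * δ = (δ + s δ) * δ - (δ * s δ) * 1 from by ring, sub_tmul]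
          simp only [one_mul, mul_one]
          abel
      _ = δ ⊗ₜ[s.fixedSubring] (d + σ) - (1:R) ⊗ₜ[s.fixedSubring] (d*σ)
          - δ ⊗ₜ[s.fixedSubring] σ - δ ⊗ₜ[s.fixedSubring] d + (1:R) ⊗ₜ[s.fixedSubring] (d*σ) := by
          rw [e1, e2, map_add, map_mul, mul_one, mul_one, ← hd, ← hσ]
      _ = 0 := by rw [tmul_add]; abel
  have hBξ : ((s δ) ⊗ₜ[s.fixedSubring] (1:Q) - (1:R) ⊗ₜ[s.fixedSubring] d) * ξ = 0 := by
    rw [hξ]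
    calc ((s δ) ⊗ₜ[s.fixedSubring] (1:Q) - (1:R) ⊗ₜ[s.fixedSubring] d)
          * (δ ⊗ₜ[s.fixedSubring] (1:Q) - (1:R) ⊗ₜ[s.fixedSubring] d)
        = (s δ * δ) ⊗ₜ[s.fixedSubring] ((1:Q)*1) - (s δ * 1) ⊗ₜ[s.fixedSubring] (1*d)
          - ((1*δ) ⊗ₜ[s.fixedSubring] (d*1) - (1*1 : R) ⊗ₜ[s.fixedSubring] (d*d)) := by
          rw [sub_mul, mul_sub, mul_sub, hmul, hmul, hmul, hmul]
      _ = ((δ * s δ) * 1) ⊗ₜ[s.fixedSubring] (1:Q)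
          - (((δ + s δ) * 1) ⊗ₜ[s.fixedSubring] d - δ ⊗ₜ[s.fixedSubring] d)
          - δ ⊗ₜ[s.fixedSubring] d + (1:R) ⊗ₜ[s.fixedSubring] (d*d) := by
          rw [show s δ * δ = (δ * s δ) * 1 from by ring,
            show (s δ * 1) ⊗ₜ[s.fixedSubring] (1*d) = ((δ + s δ) * 1 - δ) ⊗ₜ[s.fixedSubring] d
              from by rw [one_mul]; congr 1; ring, sub_tmul]
          simp only [one_mul, mul_one]
          abel
      _ = (1:R) ⊗ₜ[s.fixedSubring] (d*σ)
          - (1:R) ⊗ₜ[s.fixedSubring] ((d + σ)*d)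
          + (1:R) ⊗ₜ[s.fixedSubring] (d*d) := by
          rw [e2, e3 d, map_add, map_mul, mul_one, ← hd, ← hσ]
          abel
      _ = (1:R) ⊗ₜ[s.fixedSubring] (d*σ - (d + σ)*d + d*d) := by
          rw [tmul_add, tmul_sub]
      _ = 0 := by rw [show d*σ - (d + σ)*d + d*d = 0 from by ring, tmul_zero]
  have hσd : σ - d ≠ 0 := sub_ne_zero.mpr hne
  refine ⟨?_, ?_, ?_⟩
  · -- part (i)
    intro x
    set c₁ := (φ x).1 with hc₁
    set c₂ := (φ x).2 with hc₂
    set q₂ : Q := (c₁ + σ * c₂) / (σ - d) with hq₂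
    refine ⟨(c₂ - q₂, q₂), ?_, ?_⟩
    · apply hinj
      rw [map_add, hφq, hφq, Prod.mk_add_mk]
      refine Prod.ext ?_ ?_
      · show c₁ = -((c₂ - q₂) * σ) + -(q₂ * d)
        rw [hq₂]
        have key := div_mul_cancel₀ (c₁ + σ * c₂) hσd
        linear_combination -key
      · show c₂ = (c₂ - q₂) + q₂
        ring
    · rintro ⟨y₁, y₂⟩ hy
      have h1 : φ x = (-(y₁ * σ) + -(y₂ * d), y₁ + y₂) := by
        rw [hy, map_add, hφq, hφq, Prod.mk_add_mk]
      have e1' : c₁ = -(y₁ * σ) + -(y₂ * d) := congrArg Prod.fst h1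
      have e2' : c₂ = y₁ + y₂ := congrArg Prod.snd h1
      have hy₂ : y₂ = q₂ := by
        rw [hq₂, eq_div_iff hσd]
        linear_combination -e1' - σ * e2'
      refine Prod.ext ?_ ?_
      · show y₁ = c₂ - q₂
        rw [← hy₂]
        linear_combination -e2'
      · exact hy₂
  · -- part (ii) for η
    intro r
    obtain ⟨⟨a, b⟩, h1, -⟩ := hδ r
    rw [← sub_eq_zero]
    show (r ⊗ₜ[s.fixedSubring] (1:Q)) * η - ((1:R) ⊗ₜ[s.fixedSubring] (algebraMap R Q r)) * η = 0
    rw [← sub_mul]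
    have hdiff : r ⊗ₜ[s.fixedSubring] (1:Q) - (1:R) ⊗ₜ[s.fixedSubring] (algebraMap R Q r)
        = ((1:R) ⊗ₜ[s.fixedSubring] (algebraMap R Q (b:R))) * ξ := by
      rw [hξ, hq, h1, map_add, map_mul, add_tmul, hsmul1, hsmul0, ← hd, tmul_add]
      simp only [mul_one]
      abel
    rw [hdiff, mul_assoc, hξη, mul_zero]
  · -- part (ii) for ξ
    intro r
    obtain ⟨⟨a, b⟩, h1, -⟩ := hδ r
    have ha : s (a : R) = (a : R) := a.2
    have hb : s (b : R) = (b : R) := b.2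
    have h2 : s r = (a : R) + (b : R) * s δ := by rw [h1, map_add, map_mul, ha, hb]
    rw [← sub_eq_zero]
    show ((s r) ⊗ₜ[s.fixedSubring] (1:Q)) * ξ - ((1:R) ⊗ₜ[s.fixedSubring] (algebraMap R Q r)) * ξ = 0
    rw [← sub_mul]
    have hdiff : (s r) ⊗ₜ[s.fixedSubring] (1:Q) - (1:R) ⊗ₜ[s.fixedSubring] (algebraMap R Q r)
        = ((1:R) ⊗ₜ[s.fixedSubring] (algebraMap R Q (b:R)))
          * ((s δ) ⊗ₜ[s.fixedSubring] (1:Q) - (1:R) ⊗ₜ[s.fixedSubring] d) := by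
      rw [hq, h2, h1, map_add, map_mul, add_tmul, hsmul1, hsmul0, ← hd, tmul_add]
      simp only [mul_one]
      abel
    rw [hdiff, mul_assoc, hBξ, mul_zero]
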